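/- arXiv:2403.00186 — 4 statements merged into one kernel-verified Lean document; each statement's English description precedes it below -/
import Mathlib

section
/- Let f be a continuous strictly positive probability density with CDF F bijective from ℝ onto (0,1), K a kernel with supp(K) = [-1,1] and K ∈ L¹, Δ > 0, κ ∈ (0,1), Δ₀ = κ(F(-Δ) ∧ (1-F(Δ))), and f₁ > 0 a lower bound of f on I := [F⁻¹((1-κ)F(-Δ)), F⁻¹(κ+(1-κ)F(Δ))]. Then for every h ∈ (0, Δ₀], every a, b ∈ ℝ and every x ∈ [-Δ,Δ], |∫_a^b K_h(F(z) - F(x)) dz| ≤ ‖K‖₁ / f₁. -/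
open MeasureTheory

/-- `|∫_a^b K_h(F(z)-F(x)) dz| ≤ ‖K‖₁ / f₁` for `x ∈ [-Δ,Δ]`,
`h ∈ (0,Δ₀]`. -/
theorem warped_endpoint_integral_bound (f K F Finv : ℝ → ℝ) (Δ κ f₁ : ℝ)
    (hf_pos : ∀ x, 0 < f x) (hf_cont : Continuous f)
    (hf_int : Integrable f) (hf_one : (∫ x, f x) = 1)
    (hF : ∀ x, F x = ∫ z in Set.Iic x, f z)
    (hF_bij : Set.BijOn F Set.univ (Set.Ioo (0:ℝ) 1))
    (hFinv : ∀ x, Finv (F x) = x)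
    (hFinv' : ∀ y ∈ Set.Ioo (0:ℝ) 1, F (Finv y) = y)
    (hK_supp : ∀ u, u ∉ Set.Icc (-1:ℝ) 1 → K u = 0)
    (hK_int : Integrable K)
    (hΔ : 0 < Δ) (hκ : κ ∈ Set.Ioo (0:ℝ) 1)
    (hf₁ : 0 < f₁)
    (hf_lb : ∀ z ∈ Set.Icc (Finv ((1 - κ) * F (-Δ))) (Finv (κ + (1 - κ) * F Δ)),
      f₁ ≤ f z) :
    ∀ h ∈ Set.Ioc (0:ℝ) (κ * min (F (-Δ)) (1 - F Δ)), ∀ a b : ℝ,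
      ∀ x ∈ Set.Icc (-Δ) Δ,
      |∫ z in a..b, h⁻¹ * K ((F z - F x) / h)| ≤ (∫ u, |K u|) / f₁ := by
  intro h hh a b x hx
  obtain ⟨hh0, hhΔ⟩ := hh
  obtain ⟨hκ0, hκ1⟩ := hκ
  have hK0 : (0:ℝ) ≤ ∫ u, |K u| := integral_nonneg fun u => abs_nonneg _
  have hRHS0 : (0:ℝ) ≤ (∫ u, |K u|) / f₁ := div_nonneg hK0 hf₁.le
  -- F has derivative f everywhere
  have hFderiv : ∀ z, HasDerivAt F (f z) z := by
    intro z
    have hEq : ∀ w, F w = F 0 + ∫ t in (0:ℝ)..w, f t := by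
      intro w
      have := intervalIntegral.integral_Iic_sub_Iic (μ := volume) (f := f) (a := (0:ℝ))
        (b := w) hf_int.integrableOn hf_int.integrableOn
      rw [hF w, hF 0]
      linarith
    have hd : HasDerivAt (fun w => F 0 + ∫ t in (0:ℝ)..w, f t) (f z) z := by
      simpa using ((hf_cont.integral_hasStrictDerivAt 0 z).hasDerivAt.const_add (F 0))
    exact hd.congr_of_eventuallyEq (Filter.Eventually.of_forall hEq)
  have hFmono : StrictMono F :=
    strictMono_of_hasDerivAt_pos hFderiv hf_pos
  -- bounds on F at ±Δ
  have hFΔ1 : F Δ ∈ Set.Ioo (0:ℝ) 1 := hF_bij.mapsTo (Set.mem_univ Δ)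
  have hFΔ2 : F (-Δ) ∈ Set.Ioo (0:ℝ) 1 := hF_bij.mapsTo (Set.mem_univ (-Δ))
  set c := F x with hc
  have hcl : F (-Δ) ≤ c := hFmono.monotone hx.1
  have hcr : c ≤ F Δ := hFmono.monotone hx.2
  have hhl : h ≤ κ * F (-Δ) := le_trans hhΔ (by
    have := min_le_left (F (-Δ)) (1 - F Δ)
    nlinarith)
  have hhr : h ≤ κ * (1 - F Δ) := le_trans hhΔ (by
    have := min_le_right (F (-Δ)) (1 - F Δ)
    nlinarith)
  set l := (1 - κ) * F (-Δ) with hl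
  set r := κ + (1 - κ) * F Δ with hr
  have hlmem : l ∈ Set.Ioo (0:ℝ) 1 := by
    constructor
    · nlinarith [hFΔ2.1]
    · nlinarith [hFΔ2.2]
  have hrmem : r ∈ Set.Ioo (0:ℝ) 1 := by
    constructor
    · nlinarith [hFΔ1.1]
    · nlinarith [hFΔ1.2]
  -- localization: if |F z - c| ≤ h then f₁ ≤ f z
  have hloc : ∀ z : ℝ, |F z - c| ≤ h → f₁ ≤ f z := by
    intro z hz
    rw [abs_le] at hz
    have h1 : l ≤ F z := by nlinarith [hz.1]
    have h2 : F z ≤ r := by nlinarith [hz.2]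
    refine hf_lb z ⟨?_, ?_⟩
    · by_contra hcon
      push_neg at hcon
      have := hFmono hcon
      rw [hFinv' l hlmem] at this
      linarith
    · by_contra hcon
      push_neg at hcon
      have := hFmono hcon
      rw [hFinv' r hrmem] at this
      linarith
  -- the comparison function
  set ψ : ℝ → ℝ := fun u => h⁻¹ * |K ((u - c) / h)| with hψ
  have hψ_nonneg : ∀ u, 0 ≤ ψ u := fun u => by positivity
  have hψ_int : Integrable ψ := by
    have h1 : Integrable (fun u : ℝ => |K (u / h)|) :=
      hK_int.abs.comp_div (ne_of_gt hh0)
    have h2 : Integrable (fun u : ℝ => |K ((u - c) / h)|) :=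
      h1.comp_sub_right c
    exact h2.const_mul _
  have hψ_eq : (∫ u, ψ u) = ∫ u, |K u| := by
    rw [hψ]
    simp only [integral_const_mul]
    rw [integral_sub_right_eq_self (fun u : ℝ => |K (u / h)|) c]
    rw [MeasureTheory.Measure.integral_comp_div (fun u : ℝ => |K u|) h]
    rw [abs_of_pos hh0, smul_eq_mul]
    field_simp
  -- pointwise bound
  have hpt : ∀ z : ℝ, |h⁻¹ * K ((F z - c) / h)| ≤ f₁⁻¹ * (|f z| * ψ (F z)) := by
    intro z
    have hψFz : ψ (F z) = h⁻¹ * |K ((F z - c) / h)| := rfl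
    by_cases hz : K ((F z - c) / h) = 0
    · rw [abs_mul, hz, abs_zero, mul_zero]
      positivity
    · have hmem : (F z - c) / h ∈ Set.Icc (-1:ℝ) 1 := by
        by_contra hcon; exact hz (hK_supp _ hcon)
      have habs : |F z - c| ≤ h := by
        rw [Set.mem_Icc, ← abs_le] at hmem
        rw [abs_div, abs_of_pos hh0, div_le_one hh0] at hmem
        exact hmem
      have hfz : f₁ ≤ f z := hloc z habs
      have h1 : (1:ℝ) ≤ f₁⁻¹ * |f z| := by
        rw [abs_of_pos (hf_pos z), mul_comm, ← div_eq_mul_inv]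
        exact (one_le_div hf₁).mpr hfz
      calc |h⁻¹ * K ((F z - c) / h)| = ψ (F z) := by
            rw [hψFz, abs_mul, abs_of_pos (by positivity : (0:ℝ) < h⁻¹)]
        _ ≤ (f₁⁻¹ * |f z|) * ψ (F z) := by
            nlinarith [hψ_nonneg (F z), hψ_nonneg (F z)]
        _ = f₁⁻¹ * (|f z| * ψ (F z)) := by ring
  -- change of variables: integrability and value of the comparison integral
  have hFuniv : F '' Set.univ = Set.Ioo (0:ℝ) 1 := hF_bij.image_eq
  have hderivWithin : ∀ z ∈ (Set.univ : Set ℝ), HasDerivWithinAt F (f z) Set.univ z :=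
    fun z _ => (hFderiv z).hasDerivWithinAt
  have hinj : Set.InjOn F Set.univ := hF_bij.injOn
  have hcomp_int : Integrable (fun z => |f z| • ψ (F z)) := by
    rw [← integrableOn_univ, ← integrableOn_image_iff_integrableOn_abs_deriv_smul
      MeasurableSet.univ hderivWithin hinj ψ, hFuniv]
    exact hψ_int.integrableOn
  have hcomp_val : (∫ z, |f z| • ψ (F z)) ≤ ∫ u, |K u| := by
    have := integral_image_eq_integral_abs_deriv_smul MeasurableSet.univ hderivWithin hinj ψ
    rw [hFuniv] at this
    rw [← setIntegral_univ, ← this]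
    calc (∫ u in Set.Ioo (0:ℝ) 1, ψ u) ≤ ∫ u, ψ u :=
          setIntegral_le_integral hψ_int (Filter.Eventually.of_forall hψ_nonneg)
      _ = ∫ u, |K u| := hψ_eq
  -- the full comparison function
  set G : ℝ → ℝ := fun z => f₁⁻¹ * (|f z| * ψ (F z)) with hG
  have hG_int : Integrable G := by
    have := hcomp_int.const_mul f₁⁻¹
    simpa [hG, smul_eq_mul] using this
  have hG_val : (∫ z, G z) ≤ (∫ u, |K u|) / f₁ := by
    rw [hG]
    simp only [integral_const_mul]
    rw [div_eq_inv_mul]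
    have : (∫ z, |f z| * ψ (F z)) ≤ ∫ u, |K u| := by
      simpa [smul_eq_mul] using hcomp_val
    exact mul_le_mul_of_nonneg_left this (by positivity)
  -- now the main estimate
  by_cases hint : IntervalIntegrable (fun z => h⁻¹ * K ((F z - c) / h)) volume a b
  · calc |∫ z in a..b, h⁻¹ * K ((F z - c) / h)|
        ≤ ∫ z in Set.uIoc a b, |h⁻¹ * K ((F z - c) / h)| := by
          have := intervalIntegral.norm_integral_le_integral_norm_uIoc
            (f := fun z => h⁻¹ * K ((F z - c) / h)) (a := a) (b := b) (μ := volume)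
          simp only [Real.norm_eq_abs] at this
          exact this
      _ ≤ ∫ z in Set.uIoc a b, G z := by
          refine setIntegral_mono_on ?_ hG_int.integrableOn measurableSet_uIoc
            fun z _ => hpt z
          have := hint.def'.norm
          simp only [Real.norm_eq_abs] at this
          exact this
      _ ≤ ∫ z, G z :=
          setIntegral_le_integral hG_int
            (Filter.Eventually.of_forall fun z => by positivity)
      _ ≤ (∫ u, |K u|) / f₁ := hG_val
  · rw [intervalIntegral.integral_undef hint, abs_zero]
    exact hRHS0
end

section
/- Let f be a strictly positive continuous probability density on ℝ with CDF F bijective onto (0,1), and let K be a kernel with supp(K) = [-1,1] and K ∈ L¹. Suppose b : ℝ → ℝ is bounded on the compact interval I := [F⁻¹((1-κ)F(-Δ)), F⁻¹(κ+(1-κ)F(Δ))] for Δ > 0, κ ∈ (0,1). Then for every x ∈ [-Δ,Δ] and h ∈ (0, κ(F(-Δ) ∧ (1-F(Δ)))], ∫_ℝ |K_h(F(z) - F(x))| b(z)² f(z) dz ≤ (sup_{z∈I} |b(z)|)² ‖K‖₁. -/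
open MeasureTheory

/-- `∫ |K_h(F(z)-F(x))| b(z)² f(z) dz ≤ (sup_I |b|)² ‖K‖₁`. -/
theorem warped_weighted_L1_bound (f K F Finv b : ℝ → ℝ) (Δ κ M : ℝ)
    (hf_pos : ∀ x, 0 < f x) (hf_cont : Continuous f)
    (hf_int : Integrable f) (hf_one : (∫ x, f x) = 1)
    (hF : ∀ x, F x = ∫ z in Set.Iic x, f z)
    (hF_bij : Set.BijOn F Set.univ (Set.Ioo (0:ℝ) 1))
    (hFinv : ∀ x, Finv (F x) = x)
    (hFinv' : ∀ y ∈ Set.Ioo (0:ℝ) 1, F (Finv y) = y)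
    (hK_supp : ∀ u, u ∉ Set.Icc (-1:ℝ) 1 → K u = 0)
    (hK_int : Integrable K)
    (hΔ : 0 < Δ) (hκ : κ ∈ Set.Ioo (0:ℝ) 1)
    (hM : ∀ z ∈ Set.Icc (Finv ((1 - κ) * F (-Δ))) (Finv (κ + (1 - κ) * F Δ)),
      |b z| ≤ M) :
    ∀ x ∈ Set.Icc (-Δ) Δ, ∀ h ∈ Set.Ioc (0:ℝ) (κ * min (F (-Δ)) (1 - F Δ)),
      (∫ z, |h⁻¹ * K ((F z - F x) / h)| * b z ^ 2 * f z)
        ≤ M ^ 2 * ∫ u, |K u| := by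
  obtain ⟨hκ0, hκ1⟩ := hκ
  intro x hx h hh
  obtain ⟨hh0, hhle⟩ := hh
  have hF01 : ∀ t, F t ∈ Set.Ioo (0:ℝ) 1 := fun t => hF_bij.mapsTo (Set.mem_univ t)
  -- F has derivative f
  have hder : ∀ t, HasDerivAt F (f t) t := by
    intro t
    have h1 : HasDerivAt (fun u => ∫ s in (0:ℝ)..u, f s) (f t) t :=
      intervalIntegral.integral_hasDerivAt_right hf_int.intervalIntegrable
        (hf_cont.stronglyMeasurableAtFilter _ _) hf_cont.continuousAt
    have hFeq : F = fun u => F 0 + ∫ s in (0:ℝ)..u, f s := by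
      funext u
      rw [hF u, hF 0, ← intervalIntegral.integral_Iic_sub_Iic hf_int.integrableOn
        hf_int.integrableOn]
      ring
    rw [hFeq]
    simpa using h1.const_add (F 0)
  have hmono : StrictMono F := strictMono_of_deriv_pos fun t => by
    rw [(hder t).deriv]; exact hf_pos t
  -- endpoint facts
  set e1 : ℝ := (1 - κ) * F (-Δ) with he1def
  set e2 : ℝ := κ + (1 - κ) * F Δ with he2def
  have hFd := hF01 (-Δ)
  have hFD := hF01 Δ
  have he1 : e1 ∈ Set.Ioo (0:ℝ) 1 := by
    constructor
    · exact mul_pos (by linarith) hFd.1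
    · nlinarith [hFd.1, hFd.2]
  have he2 : e2 ∈ Set.Ioo (0:ℝ) 1 := by
    constructor
    · nlinarith [hFD.1]
    · nlinarith [hFD.2]
  have hcx1 : F (-Δ) ≤ F x := hmono.monotone hx.1
  have hcx2 : F x ≤ F Δ := hmono.monotone hx.2
  have hmin1 : κ * min (F (-Δ)) (1 - F Δ) ≤ κ * F (-Δ) :=
    mul_le_mul_of_nonneg_left (min_le_left _ _) hκ0.le
  have hmin2 : κ * min (F (-Δ)) (1 - F Δ) ≤ κ * (1 - F Δ) :=
    mul_le_mul_of_nonneg_left (min_le_right _ _) hκ0.le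
  have hlow : e1 ≤ F x - h := by rw [he1def]; nlinarith
  have hhigh : F x + h ≤ e2 := by rw [he2def]; nlinarith
  have hi1 : F (Finv e1) = e1 := hFinv' e1 he1
  have hi2 : F (Finv e2) = e2 := hFinv' e2 he2
  -- support localization
  have hmem : ∀ z, K ((F z - F x) / h) ≠ 0 →
      z ∈ Set.Icc (Finv e1) (Finv e2) := by
    intro z hz
    have harg : (F z - F x) / h ∈ Set.Icc (-1:ℝ) 1 := by
      by_contra hc; exact hz (hK_supp _ hc)
    obtain ⟨ha1, ha2⟩ := harg
    have hb1 : F x - h ≤ F z := by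
      have := (le_div_iff₀ hh0).mp ha1
      nlinarith
    have hb2 : F z ≤ F x + h := by
      have := (div_le_one hh0).mp ha2
      linarith
    constructor
    · exact hmono.le_iff_le.mp (by rw [hi1]; linarith)
    · exact hmono.le_iff_le.mp (by rw [hi2]; linarith)
  have hM0 : 0 ≤ M := by
    refine (abs_nonneg (b (Finv e1))).trans (hM _ ⟨le_refl _, ?_⟩)
    exact hmono.le_iff_le.mp (by rw [hi1, hi2]; linarith)
  -- the rescaled kernel
  set g : ℝ → ℝ := fun t => |h⁻¹ * K ((t - F x) / h)| with hgdef
  have hg_int : Integrable g :=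
    (((hK_int.comp_div hh0.ne').comp_sub_right (F x)).const_mul h⁻¹).abs
  have hgval : (∫ t, g t) = ∫ u, |K u| := by
    have h1 : (∫ t, g t) = ∫ s, |h⁻¹ * K (s / h)| :=
      integral_sub_right_eq_self (fun s => |h⁻¹ * K (s / h)|) (F x)
    have h2 : (∫ s, |h⁻¹ * K (s / h)|) = |h⁻¹| * ∫ s, |K (s / h)| := by
      simp_rw [abs_mul]
      exact integral_const_mul _ _
    have h3 : (∫ s, |K (s / h)|) = |h| • ∫ u, |K u| :=
      MeasureTheory.Measure.integral_comp_div (fun u => |K u|) h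
    rw [h1, h2, h3, smul_eq_mul, abs_inv, abs_of_pos hh0]
    field_simp
  -- change of variables
  have himg : F '' Set.univ = Set.Ioo (0:ℝ) 1 := hF_bij.image_eq
  have hCV : (∫ t in Set.Ioo (0:ℝ) 1, g t) = ∫ z, |f z| • g (F z) := by
    rw [← himg, MeasureTheory.integral_image_eq_integral_abs_deriv_smul MeasurableSet.univ
      (fun z _ => (hder z).hasDerivWithinAt) hmono.injective.injOn g]
    simp
  have hInt2 : Integrable fun z => |f z| • g (F z) := by
    have := (MeasureTheory.integrableOn_image_iff_integrableOn_abs_deriv_smul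
      MeasurableSet.univ (fun z _ => (hder z).hasDerivWithinAt) hmono.injective.injOn g).mp
      (by rw [himg]; exact hg_int.integrableOn)
    simpa [MeasureTheory.integrableOn_univ] using this
  have hbound : (∫ t in Set.Ioo (0:ℝ) 1, g t) ≤ ∫ t, g t :=
    setIntegral_le_integral hg_int (Filter.Eventually.of_forall fun t => abs_nonneg _)
  -- pointwise bound
  have hpt : ∀ z, |h⁻¹ * K ((F z - F x) / h)| * b z ^ 2 * f z
      ≤ M ^ 2 * (|f z| • g (F z)) := by
    intro z
    have hgFz : g (F z) = |h⁻¹ * K ((F z - F x) / h)| := rfl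
    rw [smul_eq_mul, hgFz, abs_of_pos (hf_pos z)]
    by_cases hz : K ((F z - F x) / h) = 0
    · simp [hz]
    · have hb2 : b z ^ 2 ≤ M ^ 2 := by
        have h1 : |b z| ≤ M := hM z (hmem z hz)
        nlinarith [abs_nonneg (b z), sq_abs (b z)]
      nlinarith [mul_nonneg (mul_nonneg (hf_pos z).le
        (abs_nonneg (h⁻¹ * K ((F z - F x) / h)))) (sub_nonneg.mpr hb2)]
  calc (∫ z, |h⁻¹ * K ((F z - F x) / h)| * b z ^ 2 * f z)
      ≤ ∫ z, M ^ 2 * (|f z| • g (F z)) := by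
        refine integral_mono_of_nonneg (Filter.Eventually.of_forall fun z => ?_)
          (hInt2.const_mul _) (Filter.Eventually.of_forall hpt)
        exact mul_nonneg (mul_nonneg (abs_nonneg _) (sq_nonneg _)) (hf_pos z).le
    _ = M ^ 2 * ∫ z, |f z| • g (F z) := integral_const_mul _ _
    _ = M ^ 2 * ∫ t in Set.Ioo (0:ℝ) 1, g t := by rw [hCV]
    _ ≤ M ^ 2 * ∫ t, g t := mul_le_mul_of_nonneg_left hbound (sq_nonneg M)
    _ = M ^ 2 * ∫ u, |K u| := by rw [hgval]
end

section
/- Let b : ℝ → ℝ be bounded on I and f a strictly positive continuous density with CDF F bijective onto (0,1), f ≥ f₁ > 0 on I, with K supported in [-1,1], δ supported in [-Δ,Δ], ‖δ‖₁ ≤ 1 wlog; define ψ_{h,h'}(x) := [K_h ∗ ((b_{h'}·δ/f)∘F⁻¹ · 𝟙_{(0,1)})](F(x)). Then ∫_ℝ |ψ_{h,h'}(x)| dx ≤ ‖K‖₁² (sup_{z∈I}|b(z)|)/f₁ for all h, h' ∈ (0, Δ₀], where Δ₀ = κ(F(-Δ)∧(1-F(Δ))) and I := [F⁻¹((1-κ)F(-Δ)),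 F⁻¹(κ+(1-κ)F(Δ))]. -/
open MeasureTheory

open Set ENNReal in
set_option maxHeartbeats 1000000 in
/-- `∫ |ψ_{h,h'}| ≤ ‖K‖₁² (sup_I |b|) / f₁`, where
`ψ_{h,h'}(x) = [K_h ∗ ((b_{h'}·δ/f)∘F⁻¹ · 𝟙_(0,1))](F(x))` and
`b_{h'}(z) = [K_{h'} ∗ ((b∘F⁻¹)𝟙_(0,1))](F(z))`. -/
theorem psi_L1_bound (f K F Finv b δ : ℝ → ℝ) (Δ κ f₁ M : ℝ)
    (hf_pos : ∀ x, 0 < f x) (hf_cont : Continuous f)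
    (hf_int : Integrable f) (hf_one : (∫ x, f x) = 1)
    (hF : ∀ x, F x = ∫ z in Set.Iic x, f z)
    (hF_bij : Set.BijOn F Set.univ (Set.Ioo (0:ℝ) 1))
    (hFinv : ∀ x, Finv (F x) = x)
    (hFinv' : ∀ y ∈ Set.Ioo (0:ℝ) 1, F (Finv y) = y)
    (hK_supp : ∀ u, u ∉ Set.Icc (-1:ℝ) 1 → K u = 0)
    (hK_int : Integrable K)
    (hδ_nonneg : ∀ x, 0 ≤ δ x)
    (hδ_supp : ∀ x, x ∉ Set.Icc (-Δ) Δ → δ x = 0)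
    (hδ_one : (∫ x, δ x) = 1) (hδ_L1 : (∫ x, |δ x|) ≤ 1)
    (hΔ : 0 < Δ) (hκ : κ ∈ Set.Ioo (0:ℝ) 1) (hf₁ : 0 < f₁)
    (hf_lb : ∀ z ∈ Set.Icc (Finv ((1 - κ) * F (-Δ))) (Finv (κ + (1 - κ) * F Δ)),
      f₁ ≤ f z)
    (hM : ∀ z ∈ Set.Icc (Finv ((1 - κ) * F (-Δ))) (Finv (κ + (1 - κ) * F Δ)),
      |b z| ≤ M) :
    ∀ h ∈ Set.Ioc (0:ℝ) (κ * min (F (-Δ)) (1 - F Δ)),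
    ∀ h' ∈ Set.Ioc (0:ℝ) (κ * min (F (-Δ)) (1 - F Δ)),
      (∫ x, |∫ y in (0:ℝ)..1, h⁻¹ * K ((F x - y) / h) *
          ((∫ y' in (0:ℝ)..1, h'⁻¹ * K ((F (Finv y) - y') / h') * b (Finv y'))
            * δ (Finv y) / f (Finv y))|)
        ≤ (∫ u, |K u|) ^ 2 * M / f₁ := by
  obtain ⟨hκ0, hκ1⟩ := hκ
  intro h hh h' hh'
  obtain ⟨hh0, hhle⟩ := hh
  obtain ⟨hh'0, hh'le⟩ := hh'
  set C := ∫ u, |K u| with hC_def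
  have hC0 : 0 ≤ C := integral_nonneg fun u => abs_nonneg _
  -- basic facts about F
  have hF01 : ∀ x, F x ∈ Ioo (0:ℝ) 1 := fun x => hF_bij.mapsTo (mem_univ x)
  have hFderiv : ∀ x, HasDerivAt F (f x) x := by
    intro x
    have hFeq : ∀ u, F u = F 0 + ∫ t in (0:ℝ)..u, f t := by
      intro u
      rw [hF u, hF 0, ← intervalIntegral.integral_Iic_sub_Iic hf_int.integrableOn
        hf_int.integrableOn]
      ring
    have hD : HasDerivAt (fun u => F 0 + ∫ t in (0:ℝ)..u, f t) (f x) x := by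
      refine HasDerivAt.const_add _ ?_
      refine intervalIntegral.integral_hasDerivAt_right hf_int.intervalIntegrable
        ⟨univ, Filter.univ_mem, hf_cont.aestronglyMeasurable.restrict⟩ hf_cont.continuousAt
    have : F = fun u => F 0 + ∫ t in (0:ℝ)..u, f t := funext hFeq
    rw [this]
    exact hD
  have hFmono : StrictMono F := by
    intro a b hab
    have hint : F b - F a = ∫ t in a..b, f t := by
      rw [hF a, hF b,
        intervalIntegral.integral_Iic_sub_Iic hf_int.integrableOn hf_int.integrableOn]
    have hpos : 0 < ∫ t in a..b, f t :=
      intervalIntegral.intervalIntegral_pos_of_pos hf_int.intervalIntegrable hf_pos hab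
    linarith
  have hFinv_mono : ∀ {y₁ y₂ : ℝ}, y₁ ∈ Ioo (0:ℝ) 1 → y₂ ∈ Ioo (0:ℝ) 1 → y₁ ≤ y₂ →
      Finv y₁ ≤ Finv y₂ := by
    intro y₁ y₂ h1 h2 h12
    by_contra hcon
    push_neg at hcon
    have := hFmono hcon
    rw [hFinv' _ h2, hFinv' _ h1] at this
    linarith
  -- region constants
  have ha₀ : F (-Δ) ∈ Ioo (0:ℝ) 1 := hF01 _
  have hb₀ : F Δ ∈ Ioo (0:ℝ) 1 := hF01 _
  have hab : F (-Δ) ≤ F Δ := (hFmono (by linarith : -Δ < Δ)).le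
  set a₀ := F (-Δ) with ha₀_def
  set b₀ := F Δ with hb₀_def
  set α := (1 - κ) * a₀ with hα_def
  set β := κ + (1 - κ) * b₀ with hβ_def
  have hα0 : 0 < α := mul_pos (by linarith) ha₀.1
  have hβ1 : β < 1 := by nlinarith [hb₀.2]
  have hαβ : α ≤ β := by nlinarith
  have hIcc : ∀ y ∈ Icc α β, y ∈ Ioo (0:ℝ) 1 := fun y hy =>
    ⟨lt_of_lt_of_le hα0 hy.1, lt_of_le_of_lt hy.2 hβ1⟩
  have hαmem : α ∈ Ioo (0:ℝ) 1 := ⟨hα0, by nlinarith [ha₀.2]⟩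
  have hβmem : β ∈ Ioo (0:ℝ) 1 := ⟨by nlinarith [hb₀.1], hβ1⟩
  have hregion : ∀ y ∈ Icc α β,
      Finv y ∈ Icc (Finv ((1 - κ) * F (-Δ))) (Finv (κ + (1 - κ) * F Δ)) := fun y hy =>
    ⟨hFinv_mono hαmem (hIcc y hy) hy.1, hFinv_mono (hIcc y hy) hβmem hy.2⟩
  have hbM : ∀ y ∈ Icc α β, |b (Finv y)| ≤ M := fun y hy => hM _ (hregion y hy)
  have hflb : ∀ y ∈ Icc α β, f₁ ≤ f (Finv y) := fun y hy => hf_lb _ (hregion y hy)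
  have hM0 : 0 ≤ M := le_trans (abs_nonneg _) (hbM α ⟨le_rfl, hαβ⟩)
  have hmin1 : κ * min a₀ (1 - b₀) ≤ κ * a₀ := by
    have := min_le_left a₀ (1 - b₀); nlinarith
  have hmin2 : κ * min a₀ (1 - b₀) ≤ κ * (1 - b₀) := by
    have := min_le_right a₀ (1 - b₀); nlinarith
  -- δ facts
  have hδ_int : Integrable δ := by
    by_contra hcon
    rw [integral_undef hcon] at hδ_one
    norm_num at hδ_one
  have hδy : ∀ y ∈ Ioo (0:ℝ) 1, δ (Finv y) ≠ 0 → y ∈ Icc a₀ b₀ := by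
    intro y hy hne
    have hmem : Finv y ∈ Icc (-Δ) Δ := by
      by_contra hc; exact hne (hδ_supp _ hc)
    constructor
    · calc a₀ ≤ F (Finv y) := hFmono.le_iff_le.2 hmem.1
        _ = y := hFinv' y hy
    · calc y = F (Finv y) := (hFinv' y hy).symm
        _ ≤ b₀ := hFmono.le_iff_le.2 hmem.2
  -- kernel integrability and integral values
  have hkernel_int : ∀ (w c : ℝ), 0 < c → Integrable (fun y' => c⁻¹ * |K ((w - y') / c)|) := by
    intro w c hc
    exact ((hK_int.abs.comp_div hc.ne').comp_sub_left w).const_mul _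
  have hkernel_val : ∀ (w c : ℝ), 0 < c → (∫ y', c⁻¹ * |K ((w - y') / c)|) = C := by
    intro w c hc
    rw [MeasureTheory.integral_const_mul]
    have : (fun y' => |K ((w - y') / c)|) = fun y' => (fun t => |K (t / c)|) (w - y') := rfl
    rw [this, integral_sub_left_eq_self (fun t => |K (t / c)|) volume w,
      Measure.integral_comp_div (fun t => |K t|) c, smul_eq_mul, abs_of_pos hc]
    field_simp
    exact hC_def.symm
  have hkernel_int' : ∀ (w c : ℝ), 0 < c → Integrable (fun u => c⁻¹ * |K ((u - w) / c)|) := by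
    intro w c hc
    exact ((hK_int.abs.comp_div hc.ne').comp_sub_right w).const_mul _
  have hkernel_val' : ∀ (w c : ℝ), 0 < c → (∫ u, c⁻¹ * |K ((u - w) / c)|) = C := by
    intro w c hc
    rw [MeasureTheory.integral_const_mul]
    have : (fun u => |K ((u - w) / c)|) = fun u => (fun t => |K (t / c)|) (u - w) := rfl
    rw [this, integral_sub_right_eq_self (fun t => |K (t / c)|) w,
      Measure.integral_comp_div (fun t => |K t|) c, smul_eq_mul, abs_of_pos hc]
    field_simp
    exact hC_def.symm
  -- inner bound
  have hinner : ∀ z ∈ Icc (-Δ) Δ,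
      |∫ y' in (0:ℝ)..1, h'⁻¹ * K ((F z - y') / h') * b (Finv y')| ≤ C * M := by
    intro z hz
    have hw_mem : F z ∈ Icc a₀ b₀ := ⟨hFmono.le_iff_le.2 hz.1, hFmono.le_iff_le.2 hz.2⟩
    set w := F z with hw
    calc |∫ y' in (0:ℝ)..1, h'⁻¹ * K ((w - y') / h') * b (Finv y')|
        ≤ ∫ y' in (0:ℝ)..1, |h'⁻¹ * K ((w - y') / h') * b (Finv y')| :=
          intervalIntegral.abs_integral_le_integral_abs zero_le_one
      _ = ∫ y' in Ioc (0:ℝ) 1, |h'⁻¹ * K ((w - y') / h') * b (Finv y')| :=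
          intervalIntegral.integral_of_le zero_le_one
      _ ≤ ∫ y' in Ioc (0:ℝ) 1, h'⁻¹ * |K ((w - y') / h')| * M := by
          apply integral_mono_of_nonneg
          · exact Filter.Eventually.of_forall fun y' => abs_nonneg _
          · exact ((hkernel_int w h' hh'0).mul_const M).restrict
          · filter_upwards [ae_restrict_mem measurableSet_Ioc] with y' hy'
            by_cases hk : K ((w - y') / h') = 0
            · simp only [hk, mul_zero, zero_mul, abs_zero, abs_of_nonneg]
              positivity
            · have hky : (w - y') / h' ∈ Icc (-1:ℝ) 1 := by
                by_contra hc; exact hk (hK_supp _ hc)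
              have he : (w - y') / h' * h' = w - y' := div_mul_cancel₀ _ hh'0.ne'
              have h1 : -h' ≤ w - y' ∧ w - y' ≤ h' := by
                constructor
                · nlinarith [mul_le_mul_of_nonneg_right hky.1 hh'0.le]
                · nlinarith [mul_le_mul_of_nonneg_right hky.2 hh'0.le]
              have hy'' : y' ∈ Icc α β := by
                have h2 : h' ≤ κ * a₀ := le_trans hh'le hmin1
                have h3 : h' ≤ κ * (1 - b₀) := le_trans hh'le hmin2
                constructor
                · nlinarith [hw_mem.1]
                · nlinarith [hw_mem.2]
              have hb' := hbM y' hy''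
              rw [abs_mul, abs_mul, abs_inv, abs_of_pos hh'0]
              exact mul_le_mul_of_nonneg_left hb' (by positivity)
      _ ≤ ∫ y', h'⁻¹ * |K ((w - y') / h')| * M := by
          apply setIntegral_le_integral ((hkernel_int w h' hh'0).mul_const M)
          exact Filter.Eventually.of_forall fun y' => by positivity
      _ = C * M := by rw [MeasureTheory.integral_mul_const, hkernel_val w h' hh'0]
  -- change of variables (lintegral version)
  have himg_lintegral : ∀ g : ℝ → ℝ≥0∞,
      (∫⁻ u in Ioo (0:ℝ) 1, g u) = ∫⁻ x, ENNReal.ofReal (f x) * g (F x) := by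
    intro g
    rw [← hF_bij.image_eq,
      lintegral_image_eq_lintegral_abs_det_fderiv_mul volume MeasurableSet.univ
        (fun x _ => ((hFderiv x).hasDerivWithinAt).hasFDerivWithinAt) hF_bij.injOn g,
      Measure.restrict_univ]
    apply lintegral_congr
    intro x
    rw [ContinuousLinearMap.det_toSpanSingleton, abs_of_pos (hf_pos x)]
  have hnull : ∀ N : Set ℝ, volume N = 0 → volume (F '' N) = 0 := by
    intro N hN
    refine measure_mono_null (image_mono (subset_toMeasurable volume N)) ?_
    have hmeas : MeasurableSet (toMeasurable volume N) := measurableSet_toMeasurable _ _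
    have him := lintegral_image_eq_lintegral_abs_det_fderiv_mul volume hmeas
      (fun x _ => ((hFderiv x).hasDerivWithinAt).hasFDerivWithinAt)
      (hF_bij.injOn.mono (subset_univ _)) (fun _ => 1)
    rw [setLIntegral_one] at him
    rw [him, Measure.restrict_eq_zero.mpr (by rwa [measure_toMeasurable]),
      lintegral_zero_measure]
  -- measurability on (0,1)
  have hFinv_meas : AEMeasurable Finv (volume.restrict (Ioo (0:ℝ) 1)) :=
    aemeasurable_restrict_of_monotoneOn measurableSet_Ioo
      (fun _ h1 _ h2 h12 => hFinv_mono h1 h2 h12)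
  set D : ℝ → ℝ := fun y => δ (Finv y) / f (Finv y) with hD_def
  have hD_nonneg : ∀ y, 0 ≤ D y := fun y => div_nonneg (hδ_nonneg _) (hf_pos _).le
  have hδ_sm := hδ_int.1
  have hδcomp : (fun y => δ (Finv y)) =ᵐ[volume.restrict (Ioo (0:ℝ) 1)]
      fun y => hδ_sm.mk δ (Finv y) := by
    have himgnull : volume (F '' {t | δ t ≠ hδ_sm.mk δ t}) = 0 := hnull _ hδ_sm.ae_eq_mk
    rw [Filter.EventuallyEq, ae_iff, Measure.restrict_apply' measurableSet_Ioo]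
    refine measure_mono_null ?_ himgnull
    rintro y ⟨hy1, hy2⟩
    exact ⟨Finv y, hy1, hFinv' y hy2⟩
  have hD_meas : AEMeasurable D (volume.restrict (Ioo (0:ℝ) 1)) := by
    have h1 : AEMeasurable (fun y => hδ_sm.mk δ (Finv y)) (volume.restrict (Ioo (0:ℝ) 1)) :=
      hδ_sm.stronglyMeasurable_mk.measurable.comp_aemeasurable hFinv_meas
    have h2 : AEMeasurable (fun y => δ (Finv y)) (volume.restrict (Ioo (0:ℝ) 1)) :=
      h1.congr hδcomp.symm
    have h3 : AEMeasurable (fun y => f (Finv y)) (volume.restrict (Ioo (0:ℝ) 1)) :=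
      hf_cont.measurable.comp_aemeasurable hFinv_meas
    exact h2.div h3
  -- the functions
  set A' : ℝ → ℝ := fun y => ∫ y' in (0:ℝ)..1, h'⁻¹ * K ((F (Finv y) - y') / h') * b (Finv y')
    with hA'_def
  set ψ : ℝ → ℝ := fun u => ∫ y in (0:ℝ)..1, h⁻¹ * K ((u - y) / h) *
      (A' y * δ (Finv y) / f (Finv y)) with hψ_def
  show (∫ x, |ψ (F x)|) ≤ C ^ 2 * M / f₁
  -- pointwise bound
  have hpt : ∀ u ∈ Ioo (0:ℝ) 1,
      ENNReal.ofReal (|ψ u| / f (Finv u)) ≤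
        ENNReal.ofReal f₁⁻¹ *
          ∫⁻ y in Ioo (0:ℝ) 1, ENNReal.ofReal (h⁻¹ * |K ((u - y) / h)| * (C * M * D y)) := by
    intro u hu
    have hψ_Ioo : ψ u = ∫ y in Ioo (0:ℝ) 1, h⁻¹ * K ((u - y) / h) *
        (A' y * δ (Finv y) / f (Finv y)) := by
      simp only [hψ_def]
      rw [intervalIntegral.integral_of_le zero_le_one, integral_Ioc_eq_integral_Ioo]
    by_cases hmem : u ∈ Icc α β
    · have hub : ENNReal.ofReal |ψ u| ≤
          ∫⁻ y in Ioo (0:ℝ) 1, ENNReal.ofReal (h⁻¹ * |K ((u - y) / h)| * (C * M * D y)) := by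
        rw [hψ_Ioo, ← Real.norm_eq_abs, ofReal_norm]
        refine le_trans (enorm_integral_le_lintegral_enorm _) ?_
        refine lintegral_mono_ae ?_
        filter_upwards [ae_restrict_mem measurableSet_Ioo] with y hy
        rw [← ofReal_norm, Real.norm_eq_abs]
        apply ENNReal.ofReal_le_ofReal
        by_cases hδ0 : δ (Finv y) = 0
        · simp only [hD_def, hδ0, mul_zero, zero_div, zero_mul, mul_zero, abs_zero, zero_mul]
          positivity
        · have hzmem : Finv y ∈ Icc (-Δ) Δ := by
            by_contra hc; exact hδ0 (hδ_supp _ hc)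
          have hA : |A' y| ≤ C * M := hinner (Finv y) hzmem
          have habs : |h⁻¹ * K ((u - y) / h) * (A' y * δ (Finv y) / f (Finv y))| =
              h⁻¹ * |K ((u - y) / h)| * (|A' y| * (δ (Finv y) / f (Finv y))) := by
            rw [abs_mul, abs_mul, abs_div, abs_mul, abs_inv, abs_of_pos hh0,
              abs_of_nonneg (hδ_nonneg _), abs_of_pos (hf_pos _)]
            ring
          rw [habs]
          have hstep : |A' y| * (δ (Finv y) / f (Finv y)) ≤ C * M * D y :=
            mul_le_mul_of_nonneg_right hA (div_nonneg (hδ_nonneg _) (hf_pos _).le)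
          exact mul_le_mul_of_nonneg_left hstep (by positivity)
      have hreal : |ψ u| / f (Finv u) ≤ f₁⁻¹ * |ψ u| := by
        rw [← div_eq_inv_mul]
        gcongr
        exact hflb u hmem
      calc ENNReal.ofReal (|ψ u| / f (Finv u)) ≤ ENNReal.ofReal (f₁⁻¹ * |ψ u|) :=
            ENNReal.ofReal_le_ofReal hreal
        _ = ENNReal.ofReal f₁⁻¹ * ENNReal.ofReal |ψ u| :=
            ENNReal.ofReal_mul (by positivity)
        _ ≤ _ := mul_le_mul_right hub _
    · have hzero : ψ u = 0 := by
        rw [hψ_Ioo]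
        apply integral_eq_zero_of_ae
        filter_upwards [ae_restrict_mem measurableSet_Ioo] with y hy
        by_cases hδ0 : δ (Finv y) = 0
        · simp [hδ0]
        · have hyab : y ∈ Icc a₀ b₀ := hδy y hy hδ0
          have hK0 : K ((u - y) / h) = 0 := by
            apply hK_supp
            intro hc
            apply hmem
            have he : (u - y) / h * h = u - y := div_mul_cancel₀ _ hh0.ne'
            have h2 : h ≤ κ * a₀ := le_trans hhle hmin1
            have h3 : h ≤ κ * (1 - b₀) := le_trans hhle hmin2
            constructor
            · nlinarith [mul_le_mul_of_nonneg_right hc.1 hh0.le, he, hyab.1, h2]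
            · nlinarith [mul_le_mul_of_nonneg_right hc.2 hh0.le, he, hyab.2, h3]
          simp [hK0]
      rw [hzero]
      simp
  -- main estimate
  by_cases hψint : Integrable (fun x => |ψ (F x)|)
  swap
  · rw [integral_undef hψint]
    exact div_nonneg (mul_nonneg (pow_nonneg hC0 2) hM0) hf₁.le
  rw [integral_eq_lintegral_of_nonneg_ae (Filter.Eventually.of_forall fun x => abs_nonneg _)
    hψint.1]
  have key : (∫⁻ x, ENNReal.ofReal |ψ (F x)|) ≤ ENNReal.ofReal (f₁⁻¹ * (C * (C * M))) := by
    have e1 : (∫⁻ x, ENNReal.ofReal |ψ (F x)|) =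
        ∫⁻ u in Ioo (0:ℝ) 1, ENNReal.ofReal (|ψ u| / f (Finv u)) := by
      rw [himg_lintegral (fun u => ENNReal.ofReal (|ψ u| / f (Finv u)))]
      apply lintegral_congr
      intro x
      rw [hFinv x, ← ENNReal.ofReal_mul (hf_pos x).le, mul_comm (f x),
        div_mul_cancel₀ _ (hf_pos x).ne']
    have e2 : (∫⁻ u in Ioo (0:ℝ) 1, ENNReal.ofReal (|ψ u| / f (Finv u))) ≤
        ENNReal.ofReal f₁⁻¹ * ∫⁻ u in Ioo (0:ℝ) 1,
          ∫⁻ y in Ioo (0:ℝ) 1, ENNReal.ofReal (h⁻¹ * |K ((u - y) / h)| * (C * M * D y)) := by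
      rw [← lintegral_const_mul' _ _ ENNReal.ofReal_ne_top]
      refine lintegral_mono_ae ?_
      filter_upwards [ae_restrict_mem measurableSet_Ioo] with u hu
      exact hpt u hu
    have hswap : (∫⁻ u in Ioo (0:ℝ) 1,
          ∫⁻ y in Ioo (0:ℝ) 1, ENNReal.ofReal (h⁻¹ * |K ((u - y) / h)| * (C * M * D y))) =
        ∫⁻ y in Ioo (0:ℝ) 1,
          ∫⁻ u in Ioo (0:ℝ) 1, ENNReal.ofReal (h⁻¹ * |K ((u - y) / h)| * (C * M * D y)) := by
      apply lintegral_lintegral_swap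
      have hK2 : AEMeasurable (fun t : ℝ => h⁻¹ * |K (t / h)|) volume :=
        ((hK_int.abs.comp_div hh0.ne').const_mul h⁻¹).aemeasurable
      have hqmp : Measure.QuasiMeasurePreserving (fun p : ℝ × ℝ => p.1 - p.2)
          ((volume.restrict (Ioo (0:ℝ) 1)).prod (volume.restrict (Ioo (0:ℝ) 1))) volume := by
        refine (quasiMeasurePreserving_sub (volume : Measure ℝ) volume).mono ?_
          Measure.AbsolutelyContinuous.rfl
        exact (Measure.absolutelyContinuous_of_le Measure.restrict_le_self).prod
          (Measure.absolutelyContinuous_of_le Measure.restrict_le_self)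
      have h1 : AEMeasurable (fun p : ℝ × ℝ => h⁻¹ * |K ((p.1 - p.2) / h)|)
          ((volume.restrict (Ioo (0:ℝ) 1)).prod (volume.restrict (Ioo (0:ℝ) 1))) :=
        hK2.comp_quasiMeasurePreserving hqmp
      have h2 : AEMeasurable (fun p : ℝ × ℝ => C * M * D p.2)
          ((volume.restrict (Ioo (0:ℝ) 1)).prod (volume.restrict (Ioo (0:ℝ) 1))) :=
        (hD_meas.const_mul (C * M)).comp_quasiMeasurePreserving
          Measure.quasiMeasurePreserving_snd
      exact (h1.mul h2).ennreal_ofReal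
    have e4 : ∀ y : ℝ, (∫⁻ u in Ioo (0:ℝ) 1,
        ENNReal.ofReal (h⁻¹ * |K ((u - y) / h)| * (C * M * D y))) ≤
        ENNReal.ofReal (C * M * D y) * ENNReal.ofReal C := by
      intro y
      have hcnn : (0:ℝ) ≤ C * M * D y := mul_nonneg (mul_nonneg hC0 hM0) (hD_nonneg y)
      have step1 : (∫⁻ u in Ioo (0:ℝ) 1,
          ENNReal.ofReal (h⁻¹ * |K ((u - y) / h)| * (C * M * D y))) =
          ENNReal.ofReal (C * M * D y) *
            ∫⁻ u in Ioo (0:ℝ) 1, ENNReal.ofReal (h⁻¹ * |K ((u - y) / h)|) := by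
        rw [← lintegral_const_mul' _ _ ENNReal.ofReal_ne_top]
        apply lintegral_congr
        intro u
        rw [← ENNReal.ofReal_mul hcnn]
        congr 1
        ring
      rw [step1]
      refine mul_le_mul_right ?_ _
      calc (∫⁻ u in Ioo (0:ℝ) 1, ENNReal.ofReal (h⁻¹ * |K ((u - y) / h)|))
          ≤ ∫⁻ u, ENNReal.ofReal (h⁻¹ * |K ((u - y) / h)|) := setLIntegral_le_lintegral _ _
        _ = ENNReal.ofReal (∫ u, h⁻¹ * |K ((u - y) / h)|) :=
            (ofReal_integral_eq_lintegral_ofReal (hkernel_int' y h hh0)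
              (Filter.Eventually.of_forall fun u => by positivity)).symm
        _ = ENNReal.ofReal C := by rw [hkernel_val' y h hh0]
    have e6 : (∫⁻ y in Ioo (0:ℝ) 1, ENNReal.ofReal (D y)) = 1 := by
      rw [himg_lintegral (fun y => ENNReal.ofReal (D y))]
      have hz : ∀ z, ENNReal.ofReal (f z) * ENNReal.ofReal (D (F z)) = ENNReal.ofReal (δ z) := by
        intro z
        simp only [hD_def]
        rw [hFinv z, ← ENNReal.ofReal_mul (hf_pos z).le, mul_comm (f z),
          div_mul_cancel₀ _ (hf_pos z).ne']
      rw [lintegral_congr hz,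
        ← ofReal_integral_eq_lintegral_ofReal hδ_int (Filter.Eventually.of_forall hδ_nonneg),
        hδ_one, ENNReal.ofReal_one]
    have e5 : (∫⁻ y in Ioo (0:ℝ) 1, ENNReal.ofReal (C * M * D y) * ENNReal.ofReal C) =
        (ENNReal.ofReal C * ENNReal.ofReal (C * M)) *
          ∫⁻ y in Ioo (0:ℝ) 1, ENNReal.ofReal (D y) := by
      rw [← lintegral_const_mul' _ _ (ENNReal.mul_ne_top ENNReal.ofReal_ne_top
        ENNReal.ofReal_ne_top)]
      apply lintegral_congr
      intro y
      rw [← ENNReal.ofReal_mul (mul_nonneg (mul_nonneg hC0 hM0) (hD_nonneg y)),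
        ← ENNReal.ofReal_mul hC0, ← ENNReal.ofReal_mul (mul_nonneg hC0 (mul_nonneg hC0 hM0))]
      congr 1
      ring
    calc (∫⁻ x, ENNReal.ofReal |ψ (F x)|)
        = ∫⁻ u in Ioo (0:ℝ) 1, ENNReal.ofReal (|ψ u| / f (Finv u)) := e1
      _ ≤ ENNReal.ofReal f₁⁻¹ * ∫⁻ u in Ioo (0:ℝ) 1,
            ∫⁻ y in Ioo (0:ℝ) 1, ENNReal.ofReal (h⁻¹ * |K ((u - y) / h)| * (C * M * D y)) := e2
      _ = ENNReal.ofReal f₁⁻¹ * ∫⁻ y in Ioo (0:ℝ) 1,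
            ∫⁻ u in Ioo (0:ℝ) 1, ENNReal.ofReal (h⁻¹ * |K ((u - y) / h)| * (C * M * D y)) := by
          rw [hswap]
      _ ≤ ENNReal.ofReal f₁⁻¹ * ∫⁻ y in Ioo (0:ℝ) 1,
            ENNReal.ofReal (C * M * D y) * ENNReal.ofReal C := by
          exact mul_le_mul_right (lintegral_mono fun y => e4 y) _
      _ = ENNReal.ofReal f₁⁻¹ * ((ENNReal.ofReal C * ENNReal.ofReal (C * M)) * 1) := by
          rw [e5, e6]
      _ = ENNReal.ofReal (f₁⁻¹ * (C * (C * M))) := by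
          rw [mul_one, ← ENNReal.ofReal_mul hC0, ← ENNReal.ofReal_mul (inv_nonneg.2 hf₁.le)]
      _ ≤ ENNReal.ofReal (f₁⁻¹ * (C * (C * M))) := le_rfl
  calc (∫⁻ x, ENNReal.ofReal |ψ (F x)|).toReal
      ≤ (ENNReal.ofReal (f₁⁻¹ * (C * (C * M)))).toReal :=
        ENNReal.toReal_mono ENNReal.ofReal_ne_top key
    _ = f₁⁻¹ * (C * (C * M)) := ENNReal.toReal_ofReal
        (mul_nonneg (inv_nonneg.2 hf₁.le) (mul_nonneg hC0 (mul_nonneg hC0 hM0)))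
    _ = C ^ 2 * M / f₁ := by ring
end

section
/- Under the assumptions of Proposition 3 (f strictly positive continuous density with CDF F bijective onto (0,1) and f ≥ f₂ on [-Δ,Δ], f ≥ f₁ on I; K C¹ kernel with supp(K) = [-1,1]; δ kernel with supp(δ) = [-Δ,Δ], δ bounded; σ bounded; h ∈ (0, Δ₀]), there exists a constant c > 0 depending only on T, ‖K‖₁, ‖K'‖₂, ‖σ‖_∞, ‖f‖_∞, ‖δ‖_∞, f₁, f₂ such that for every continuous path φ : [0,T] → ℝ: ∫_ℝ Φ_h(φ,x)² δ(x) dx ≤ c / h³, where Φ_h(φ,x) := T⁻¹[ ∫_{φ(0)}^{φ(T)} K_h(F(z)-F(x)) dz − (2h²)⁻¹ ∫₀ᵀ K'((F(φ(t))-F(x))/h) σ(φ(t))² f(φ(t)) dt ]. -/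
open MeasureTheory

/-- 1D change of variables for the Lebesgue integral. -/
lemma aux_lintegral_image {s : Set ℝ} {F f : ℝ → ℝ} (hs : MeasurableSet s)
    (hd : ∀ x ∈ s, HasDerivWithinAt F (f x) s x) (hinj : Set.InjOn F s)
    (g : ℝ → ENNReal) :
    ∫⁻ y in F '' s, g y = ∫⁻ x in s, ENNReal.ofReal |f x| * g (F x) := by
  simpa only [ContinuousLinearMap.det_toSpanSingleton] using
    lintegral_image_eq_lintegral_abs_det_fderiv_mul volume hs
      (fun x hx => (hd x hx).hasFDerivWithinAt) hinj g

/-- Cauchy–Schwarz for `lintegral`. -/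
lemma aux_CS {α : Type*} [MeasurableSpace α] (μ : Measure α)
    (f : α → ENNReal) (hf : AEMeasurable f μ) :
    (∫⁻ a, f a ∂μ) ^ 2 ≤ μ Set.univ * ∫⁻ a, (f a) ^ 2 ∂μ := by
  have hpq : Real.HolderConjugate 2 2 := Real.HolderConjugate.two_two
  have h := ENNReal.lintegral_mul_le_Lp_mul_Lq μ hpq hf (aemeasurable_const (b := (1:ENNReal)))
  simp only [Pi.mul_apply, mul_one, ENNReal.one_rpow, lintegral_const, one_mul] at h
  calc (∫⁻ a, f a ∂μ) ^ 2
      ≤ ((∫⁻ a, f a ^ (2:ℝ) ∂μ) ^ (1/(2:ℝ)) * (μ Set.univ) ^ (1/(2:ℝ))) ^ 2 :=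
        pow_le_pow_left' h 2
    _ = (∫⁻ a, f a ^ (2:ℝ) ∂μ) * μ Set.univ := by
        rw [mul_pow, ← ENNReal.rpow_natCast ((∫⁻ a, f a ^ (2:ℝ) ∂μ) ^ (1/(2:ℝ))) 2,
          ← ENNReal.rpow_natCast ((μ Set.univ) ^ (1/(2:ℝ))) 2, ← ENNReal.rpow_mul,
          ← ENNReal.rpow_mul]
        norm_num
    _ = μ Set.univ * ∫⁻ a, f a ^ 2 ∂μ := by
        rw [mul_comm, show (∫⁻ a, f a ^ (2:ℝ) ∂μ) = ∫⁻ a, f a ^ 2 ∂μ from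
          lintegral_congr fun a => by rw [← ENNReal.rpow_natCast (f a) 2]; norm_num]

lemma aux_int_sub_left (G : ℝ → ℝ) (c h : ℝ) :
    (∫ y, G ((c - y)/h)) = |h| * ∫ u, G u := by
  calc (∫ y, G ((c - y)/h)) = ∫ y, (fun t => G (t/h)) (c - y) := rfl
    _ = ∫ y, (fun t => G (t/h)) y := by
        rw [← integral_neg_eq_self]
        simp_rw [← integral_sub_right_eq_self (fun t => G (t/h)) (-c)]
        congr 1; ext y; ring_nf
    _ = |h| * ∫ u, G u := by
      rw [MeasureTheory.Measure.integral_comp_div G h]; simp [smul_eq_mul]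

lemma aux_int_sub_right (G : ℝ → ℝ) (c h : ℝ) :
    (∫ y, G ((y - c)/h)) = |h| * ∫ u, G u := by
  calc (∫ y, G ((y - c)/h)) = ∫ y, (fun t => G (t/h)) (y - c) := rfl
    _ = ∫ y, (fun t => G (t/h)) y := integral_sub_right_eq_self (μ := volume) (fun t => G (t/h)) c
    _ = |h| * ∫ u, G u := by
      rw [MeasureTheory.Measure.integral_comp_div G h]; simp [smul_eq_mul]

lemma aux_integrable_sub_left {G : ℝ → ℝ} (hG : Integrable G) (c : ℝ) {h : ℝ} (hh : h ≠ 0) :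
    Integrable (fun y => G ((c - y)/h)) := by
  have I1 : Integrable (fun y => G (y / h)) := by
    simpa [div_eq_mul_inv] using hG.comp_mul_right' (R := h⁻¹) (inv_ne_zero hh)
  have I3 := (I1.comp_mul_left' (R := (-1:ℝ)) (by norm_num)).comp_sub_right c
  have e : (fun t => G (-1 * (t - c) / h)) = fun y => G ((c - y)/h) := by ext t; ring_nf
  rwa [e] at I3

lemma aux_integrable_sub_right {G : ℝ → ℝ} (hG : Integrable G) (c : ℝ) {h : ℝ} (hh : h ≠ 0) :
    Integrable (fun y => G ((y - c)/h)) := by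
  have I1 : Integrable (fun y => G (y / h)) := by
    simpa [div_eq_mul_inv] using hG.comp_mul_right' (R := h⁻¹) (inv_ne_zero hh)
  exact I1.comp_sub_right c

set_option maxHeartbeats 2000000 in
/-- Proposition 3.(1): `‖Φ_h(φ,·)‖_δ² ≤ c / h³` uniformly over
continuous paths `φ` and `h ∈ (0,Δ₀]`. -/
theorem Phi_sup_bound (f F Finv K Kd σ δ : ℝ → ℝ) (T Δ κ f₁ f₂ : ℝ)
    (hT : 0 < T)
    (hf_pos : ∀ x, 0 < f x) (hf_cont : Continuous f)
    (hf_int : Integrable f) (hf_one : (∫ x, f x) = 1)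
    (hf_bdd : ∃ C, ∀ x, f x ≤ C)
    (hF : ∀ x, F x = ∫ z in Set.Iic x, f z)
    (hF_bij : Set.BijOn F Set.univ (Set.Ioo (0:ℝ) 1))
    (hFinv : ∀ x, Finv (F x) = x)
    (hFinv' : ∀ y ∈ Set.Ioo (0:ℝ) 1, F (Finv y) = y)
    (hK_deriv : ∀ u, HasDerivAt K (Kd u) u)
    (hK_supp : ∀ u, u ∉ Set.Icc (-1:ℝ) 1 → K u = 0)
    (hK_int : Integrable K) (hKd_L2 : Integrable (fun u => Kd u ^ 2))
    (hσ_bdd : ∃ C, ∀ z, |σ z| ≤ C)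
    (hδ_nonneg : ∀ x, 0 ≤ δ x) (hδ_bdd : ∃ C, ∀ x, δ x ≤ C)
    (hδ_supp : ∀ x, x ∉ Set.Icc (-Δ) Δ → δ x = 0)
    (hΔ : 0 < Δ) (hκ : κ ∈ Set.Ioo (0:ℝ) 1)
    (hf₁ : 0 < f₁)
    (hf₁_lb : ∀ z ∈ Set.Icc (Finv ((1 - κ) * F (-Δ))) (Finv (κ + (1 - κ) * F Δ)),
      f₁ ≤ f z)
    (hf₂ : 0 < f₂) (hf₂_lb : ∀ z ∈ Set.Icc (-Δ) Δ, f₂ ≤ f z) :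
    ∃ c > 0, ∀ h ∈ Set.Ioc (0:ℝ) (κ * min (F (-Δ)) (1 - F Δ)),
      ∀ φ : ℝ → ℝ, ContinuousOn φ (Set.Icc 0 T) →
        (∫ x, (T⁻¹ * ((∫ z in (φ 0)..(φ T), h⁻¹ * K ((F z - F x) / h))
            - (2 * h ^ 2)⁻¹ *
              ∫ t in (0:ℝ)..T,
                Kd ((F (φ t) - F x) / h) * σ (φ t) ^ 2 * f (φ t))) ^ 2 * δ x)
          ≤ c / h ^ 3 := by
  classical
  obtain ⟨Cσ, hCσ⟩ := hσ_bdd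
  obtain ⟨Cf, hCf⟩ := hf_bdd
  obtain ⟨Cδ, hCδ⟩ := hδ_bdd
  have hCσ0 : 0 ≤ Cσ := le_trans (abs_nonneg _) (hCσ 0)
  have hCf0 : 0 < Cf := lt_of_lt_of_le (hf_pos 0) (hCf 0)
  have hCδ0 : 0 ≤ Cδ := le_trans (hδ_nonneg 0) (hCδ 0)
  -- basic facts about F and K
  have hFd : ∀ x, HasDerivAt F (f x) x := by
    intro x
    have hrep : ∀ y, F y = F 0 + ∫ t in (0:ℝ)..y, f t := by
      intro y
      rw [hF, hF, ← intervalIntegral.integral_Iic_sub_Iic hf_int.integrableOn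
        hf_int.integrableOn]
      ring
    have hd : HasDerivAt (fun u => ∫ t in (0:ℝ)..u, f t) (f x) x :=
      intervalIntegral.integral_hasDerivAt_right hf_int.intervalIntegrable
        (hf_cont.stronglyMeasurableAtFilter _ _) hf_cont.continuousAt
    have := hd.const_add (F 0)
    simpa [← hrep] using this
  have hFmono : StrictMono F :=
    strictMono_of_deriv_pos (fun x => by rw [(hFd x).deriv]; exact hf_pos x)
  have hFcont : Continuous F :=
    continuous_iff_continuousAt.2 fun x => (hFd x).continuousAt
  have hFmem : ∀ x, F x ∈ Set.Ioo (0:ℝ) 1 := fun x => hF_bij.mapsTo (Set.mem_univ x)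
  have hFimg : F '' Set.univ = Set.Ioo (0:ℝ) 1 := hF_bij.image_eq
  have hKcont : Continuous K :=
    continuous_iff_continuousAt.2 fun u => (hK_deriv u).continuousAt
  have hKdmeas : Measurable Kd := by
    have : Kd = deriv K := funext fun u => ((hK_deriv u).deriv).symm
    rw [this]; exact measurable_deriv K
  obtain ⟨MK, hMK⟩ :=
    (HasCompactSupport.intro isCompact_Icc hK_supp).exists_bound_of_continuous hKcont
  have hMK' : ∀ u, |K u| ≤ MK := fun u => by simpa [Real.norm_eq_abs] using hMK u
  have hMK0 : 0 ≤ MK := le_trans (abs_nonneg _) (hMK' 0)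
  -- constants
  set IK : ℝ := ∫ u, |K u| with hIKdef
  set I2 : ℝ := ∫ u, Kd u ^ 2 with hI2def
  have hIK0 : 0 ≤ IK := integral_nonneg fun u => abs_nonneg _
  have hI20 : 0 ≤ I2 := integral_nonneg fun u => sq_nonneg _
  set CA : ℝ := IK / f₁ with hCAdef
  have hCA0 : 0 ≤ CA := div_nonneg hIK0 hf₁.le
  set M : ℝ := Cσ ^ 2 * Cf + 1 with hMdef
  have hM0 : 0 < M := by rw [hMdef]; positivity
  set K1 : ℝ := 2 * T⁻¹ ^ 2 * CA ^ 2 * Cδ with hK1def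
  have hK10 : 0 ≤ K1 := by rw [hK1def]; positivity
  set K2 : ℝ := 2 * T⁻¹ ^ 2 * (Cδ / f₂) with hK2def
  have hK20 : 0 ≤ K2 := by rw [hK2def]; positivity
  set CB : ℝ := K2 * (M ^ 2 * T ^ 2 * I2 / 4) with hCBdef
  have hCB0 : 0 ≤ CB := by rw [hCBdef]; positivity
  set c : ℝ := K1 * (2 * Δ) + CB + 1 with hcdef
  have hc : 0 < c := by rw [hcdef]; positivity
  refine ⟨c, hc, ?_⟩
  rintro h ⟨hh0, hhle⟩ φ hφ
  have hh3 : 0 < h ^ 3 := by positivity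
  have hFΔ1 : F (-Δ) < 1 := (hFmem (-Δ)).2
  have hFΔ0 : 0 < F (-Δ) := (hFmem (-Δ)).1
  have hFΔ0' : 0 < F Δ := (hFmem Δ).1
  have hFΔ1' : F Δ < 1 := (hFmem Δ).2
  have hhFΔ : h ≤ κ * F (-Δ) :=
    le_trans hhle (mul_le_mul_of_nonneg_left (min_le_left _ _) hκ.1.le)
  have hhFΔ' : h ≤ κ * (1 - F Δ) :=
    le_trans hhle (mul_le_mul_of_nonneg_left (min_le_right _ _) hκ.1.le)
  have hh1 : h < 1 :=
    lt_trans (lt_of_le_of_lt hhFΔ (mul_lt_of_lt_one_right hκ.1 hFΔ1)) hκ.2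
  have hh3le : h ^ 3 ≤ 1 := pow_le_one₀ hh0.le hh1.le
  have hch : 0 ≤ c / h ^ 3 := by positivity
  -- replace the path by a globally continuous one
  set ψ : ℝ → ℝ := fun t => φ (max 0 (min t T)) with hψdef
  have hψcont : Continuous ψ :=
    hφ.comp_continuous (continuous_const.max (continuous_id.min continuous_const))
      (fun t => ⟨le_max_left _ _, max_le hT.le (min_le_right _ _)⟩)
  have hψeq : ∀ t ∈ Set.Icc (0:ℝ) T, ψ t = φ t := by
    intro t ht
    rw [hψdef]
    simp only
    rw [min_eq_left ht.2, max_eq_right ht.1]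
  set A : ℝ → ℝ := fun x => ∫ z in (ψ 0)..(ψ T), h⁻¹ * K ((F z - F x) / h) with hAdef
  set B : ℝ → ℝ := fun x =>
    (2 * h ^ 2)⁻¹ * ∫ t in (0:ℝ)..T, Kd ((F (ψ t) - F x) / h) * σ (ψ t) ^ 2 * f (ψ t)
    with hBdef
  set G : ℝ → ℝ := fun x => (T⁻¹ * (A x - B x)) ^ 2 * δ x with hGdef
  have hgoal_eq :
      (∫ x, (T⁻¹ * ((∫ z in (φ 0)..(φ T), h⁻¹ * K ((F z - F x) / h))
          - (2 * h ^ 2)⁻¹ *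
            ∫ t in (0:ℝ)..T,
              Kd ((F (φ t) - F x) / h) * σ (φ t) ^ 2 * f (φ t))) ^ 2 * δ x)
        = ∫ x, G x := by
    congr 1
    funext x
    have e1 : φ 0 = ψ 0 := (hψeq 0 ⟨le_rfl, hT.le⟩).symm
    have e2 : φ T = ψ T := (hψeq T ⟨hT.le, le_rfl⟩).symm
    have e3 : (∫ t in (0:ℝ)..T, Kd ((F (φ t) - F x) / h) * σ (φ t) ^ 2 * f (φ t))
        = ∫ t in (0:ℝ)..T, Kd ((F (ψ t) - F x) / h) * σ (ψ t) ^ 2 * f (ψ t) := by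
      apply intervalIntegral.integral_congr
      intro t ht
      rw [Set.uIcc_of_le hT.le] at ht
      simp only [hψeq t ht]
    rw [e1, e2, e3]
  rw [hgoal_eq]
  have hG0 : ∀ x, 0 ≤ G x := fun x => mul_nonneg (sq_nonneg _) (hδ_nonneg x)
  by_cases hmeas : AEStronglyMeasurable G volume
  swap
  · rw [MeasureTheory.integral_non_aestronglyMeasurable hmeas]; exact hch
  rw [integral_eq_lintegral_of_nonneg_ae (Filter.Eventually.of_forall hG0) hmeas]
  refine ENNReal.toReal_le_of_le_ofReal hch ?_
  -- ## the endpoint-integral bound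
  have hA : ∀ x ∈ Set.Icc (-Δ) Δ, |A x| ≤ CA := by
    intro x hx
    set c' : ℝ := F x with hc'def
    have hc'l : F (-Δ) ≤ c' := hFmono.monotone hx.1
    have hc'r : c' ≤ F Δ := hFmono.monotone hx.2
    -- the key pointwise estimate
    have hkey : ∀ z, |h⁻¹ * K ((F z - c') / h)| ≤
        (h⁻¹ * f₁⁻¹) * (|K ((F z - c') / h)| * f z) := by
      intro z
      rcases eq_or_ne (K ((F z - c') / h)) 0 with hz | hz
      · simp [hz]
      · have hu : (F z - c') / h ∈ Set.Icc (-1:ℝ) 1 := by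
          by_contra hcon
          exact hz (hK_supp _ hcon)
        have habs : |F z - c'| ≤ h := by
          have := abs_le.2 ⟨hu.1, hu.2⟩
          rw [abs_div, abs_of_pos hh0, div_le_one hh0] at this
          exact this
        have hFz1 : (1 - κ) * F (-Δ) ≤ F z := by
          have h1 : c' - h ≤ F z := by
            have := (abs_le.1 habs).1
            linarith
          linarith only [h1, hc'l, hhFΔ]
        have hFz2 : F z ≤ κ + (1 - κ) * F Δ := by
          have h1 : F z ≤ c' + h := by
            have := (abs_le.1 habs).2
            linarith
          linarith only [h1, hc'r, hhFΔ']
        have hmem1 : (1 - κ) * F (-Δ) ∈ Set.Ioo (0:ℝ) 1 := by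
          constructor
          · exact mul_pos (sub_pos.2 hκ.2) hFΔ0
          · nlinarith only [hκ.1, hκ.2, hFΔ0, hFΔ1]
        have hmem2 : κ + (1 - κ) * F Δ ∈ Set.Ioo (0:ℝ) 1 := by
          constructor
          · nlinarith only [hκ.1, hκ.2, hFΔ0', hFΔ1']
          · nlinarith only [hκ.1, hκ.2, hFΔ0', hFΔ1']
        have hz1 : Finv ((1 - κ) * F (-Δ)) ≤ z := by
          have : F (Finv ((1 - κ) * F (-Δ))) ≤ F z := by
            rw [hFinv' _ hmem1]; exact hFz1
          exact hFmono.le_iff_le.1 this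
        have hz2 : z ≤ Finv (κ + (1 - κ) * F Δ) := by
          have : F z ≤ F (Finv (κ + (1 - κ) * F Δ)) := by
            rw [hFinv' _ hmem2]; exact hFz2
          exact hFmono.le_iff_le.1 this
        have hfz : f₁ ≤ f z := hf₁_lb z ⟨hz1, hz2⟩
        rw [abs_mul, abs_of_pos (inv_pos.2 hh0)]
        have h2 : (1:ℝ) ≤ f₁⁻¹ * f z := by
          rw [← inv_mul_cancel₀ hf₁.ne']
          exact mul_le_mul_of_nonneg_left hfz (inv_pos.2 hf₁).le
        calc h⁻¹ * |K ((F z - c') / h)| = h⁻¹ * |K ((F z - c') / h)| * 1 := (mul_one _).symm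
          _ ≤ h⁻¹ * |K ((F z - c') / h)| * (f₁⁻¹ * f z) :=
            mul_le_mul_of_nonneg_left h2
              (mul_nonneg (inv_pos.2 hh0).le (abs_nonneg _))
          _ = h⁻¹ * f₁⁻¹ * (|K ((F z - c') / h)| * f z) := by ring
    -- integrability of the majorant
    have hcontKf : Continuous fun z => |K ((F z - c') / h)| * f z :=
      ((hKcont.comp ((hFcont.sub continuous_const).div_const h)).abs).mul hf_cont
    have hmaj_int : Integrable (fun z => (h⁻¹ * f₁⁻¹) * (|K ((F z - c') / h)| * f z)) := by
      apply Integrable.mono' (hf_int.const_mul (h⁻¹ * f₁⁻¹ * MK))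
      · exact (continuous_const.mul hcontKf).aestronglyMeasurable
      · apply Filter.Eventually.of_forall
        intro z
        rw [Real.norm_eq_abs]
        have h0 : 0 ≤ h⁻¹ * f₁⁻¹ := by positivity
        have h1 : 0 ≤ |K ((F z - c') / h)| * f z :=
          mul_nonneg (abs_nonneg _) (hf_pos z).le
        rw [abs_of_nonneg (mul_nonneg h0 h1)]
        calc h⁻¹ * f₁⁻¹ * (|K ((F z - c') / h)| * f z)
            = h⁻¹ * f₁⁻¹ * f z * |K ((F z - c') / h)| := by ring
          _ ≤ h⁻¹ * f₁⁻¹ * f z * MK :=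
            mul_le_mul_of_nonneg_left (hMK' _) (mul_nonneg h0 (hf_pos z).le)
          _ = h⁻¹ * f₁⁻¹ * MK * f z := by ring
    have habs_int : Integrable (fun z => |h⁻¹ * K ((F z - c') / h)|) := by
      apply Integrable.mono' hmaj_int
      · exact ((continuous_const.mul
          (hKcont.comp ((hFcont.sub continuous_const).div_const h))).abs).aestronglyMeasurable
      · exact Filter.Eventually.of_forall fun z => by
          rw [Real.norm_eq_abs, abs_abs]; exact hkey z
    -- substitution
    have hsub : (∫ z, |K ((F z - c') / h)| * f z) = ∫ y in Set.Ioo (0:ℝ) 1, |K ((y - c') / h)| := by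
      have := integral_image_eq_integral_abs_deriv_smul MeasurableSet.univ
        (fun x _ => (hFd x).hasDerivWithinAt) (Function.Injective.injOn hFmono.injective)
        (fun y => |K ((y - c') / h)|)
      rw [hFimg, Measure.restrict_univ] at this
      have e : (∫ z, |K ((F z - c') / h)| * f z)
          = ∫ z, |f z| • |K ((F z - c') / h)| :=
        integral_congr_ae (Filter.Eventually.of_forall fun z => by
          simp only [smul_eq_mul, abs_of_pos (hf_pos z)]; ring)
      rw [e]
      exact this.symm
    have hKcomp_int : Integrable fun y => |K ((y - c') / h)| :=
      aux_integrable_sub_right hK_int.abs c' hh0.ne'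
    have hstep : |A x| ≤ (h⁻¹ * f₁⁻¹) * (h * IK) := by
      calc |A x| = |∫ z in (ψ 0)..(ψ T), h⁻¹ * K ((F z - c') / h)| := by
            simp only [hAdef, ← hc'def]
        _ ≤ ∫ z in Set.uIoc (ψ 0) (ψ T), |h⁻¹ * K ((F z - c') / h)| := by
            simpa only [Real.norm_eq_abs] using
              intervalIntegral.norm_integral_le_integral_norm_uIoc
                (f := fun z => h⁻¹ * K ((F z - c') / h)) (a := ψ 0) (b := ψ T) (μ := volume)
        _ ≤ ∫ z, |h⁻¹ * K ((F z - c') / h)| :=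
            setIntegral_le_integral habs_int
              (Filter.Eventually.of_forall fun z => abs_nonneg _)
        _ ≤ ∫ z, (h⁻¹ * f₁⁻¹) * (|K ((F z - c') / h)| * f z) :=
            integral_mono habs_int hmaj_int hkey
        _ = (h⁻¹ * f₁⁻¹) * ∫ z, |K ((F z - c') / h)| * f z := integral_const_mul _ _
        _ = (h⁻¹ * f₁⁻¹) * ∫ y in Set.Ioo (0:ℝ) 1, |K ((y - c') / h)| := by rw [hsub]
        _ ≤ (h⁻¹ * f₁⁻¹) * ∫ y, |K ((y - c') / h)| := by
            apply mul_le_mul_of_nonneg_left _ (by positivity)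
            exact setIntegral_le_integral hKcomp_int
              (Filter.Eventually.of_forall fun z => abs_nonneg _)
        _ = (h⁻¹ * f₁⁻¹) * (h * IK) := by
            rw [aux_int_sub_right (fun u => |K u|) c' h, abs_of_pos hh0, hIKdef]
    calc |A x| ≤ (h⁻¹ * f₁⁻¹) * (h * IK) := hstep
      _ = CA := by rw [hCAdef]; field_simp
  -- ## the time-integral bound
  set Q : ℝ → ENNReal := fun x =>
    ∫⁻ t in Set.Ioc (0:ℝ) T, ENNReal.ofReal (Kd ((F (ψ t) - F x) / h) ^ 2) with hQdef
  have hB : (∫⁻ x, ENNReal.ofReal (B x ^ 2 * f x))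
      ≤ ENNReal.ofReal (M ^ 2 * T ^ 2 * I2 / 4 * (1 / h ^ 3)) := by
    have hBpt : ∀ x, ENNReal.ofReal (B x ^ 2 * f x) ≤
        ENNReal.ofReal ((2 * h ^ 2)⁻¹ ^ 2 * M ^ 2) * (ENNReal.ofReal T * Q x)
          * ENNReal.ofReal (f x) := by
      intro x
      set Λ : ENNReal :=
        ∫⁻ t in Set.Ioc (0:ℝ) T, ENNReal.ofReal |Kd ((F (ψ t) - F x) / h)| with hΛdef
      have hΛmeas : AEMeasurable
          (fun t => ENNReal.ofReal |Kd ((F (ψ t) - F x) / h)|)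
          (volume.restrict (Set.Ioc (0:ℝ) T)) :=
        (((hKdmeas.comp
          (((hFcont.comp hψcont).sub continuous_const).div_const h).measurable).abs).ennreal_ofReal).aemeasurable
      have hCS : Λ ^ 2 ≤ ENNReal.ofReal T * Q x := by
        have h1 := aux_CS (volume.restrict (Set.Ioc (0:ℝ) T)) _ hΛmeas
        rw [Measure.restrict_apply_univ, Real.volume_Ioc, sub_zero] at h1
        have h2 : (∫⁻ t in Set.Ioc (0:ℝ) T,
            (ENNReal.ofReal |Kd ((F (ψ t) - F x) / h)|) ^ 2) = Q x := by
          rw [hQdef]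
          exact lintegral_congr fun t => by
            rw [← ENNReal.ofReal_pow (abs_nonneg _), sq_abs]
        rw [h2] at h1
        exact h1
      rcases eq_or_ne Λ ⊤ with hΛtop | hΛtop
      · have hL2 : Λ ^ 2 = ⊤ := by simp [hΛtop]
        have hQtop : ENNReal.ofReal T * Q x = ⊤ := top_le_iff.1 (hL2 ▸ hCS)
        have hne1 : ENNReal.ofReal ((2 * h ^ 2)⁻¹ ^ 2 * M ^ 2) ≠ 0 :=
          (ENNReal.ofReal_pos.2 (by positivity)).ne'
        have hne2 : ENNReal.ofReal (f x) ≠ 0 := (ENNReal.ofReal_pos.2 (hf_pos x)).ne'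
        have hRtop : ENNReal.ofReal ((2 * h ^ 2)⁻¹ ^ 2 * M ^ 2) * (ENNReal.ofReal T * Q x)
            * ENNReal.ofReal (f x) = ⊤ := by
          rw [hQtop, ENNReal.mul_top hne1, ENNReal.top_mul hne2]
        rw [hRtop]
        exact le_top
      · have hg : ∀ t, |Kd ((F (ψ t) - F x) / h) * σ (ψ t) ^ 2 * f (ψ t)|
            ≤ M * |Kd ((F (ψ t) - F x) / h)| := by
          intro t
          rw [abs_mul, abs_mul]
          have hσ2 : |σ (ψ t) ^ 2| ≤ Cσ ^ 2 := by
            rw [abs_of_nonneg (sq_nonneg _), ← sq_abs]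
            exact pow_le_pow_left₀ (abs_nonneg _) (hCσ _) 2
          have hfb : |f (ψ t)| ≤ Cf := by
            rw [abs_of_pos (hf_pos _)]; exact hCf _
          calc |Kd ((F (ψ t) - F x) / h)| * |σ (ψ t) ^ 2| * |f (ψ t)|
              ≤ |Kd ((F (ψ t) - F x) / h)| * Cσ ^ 2 * Cf := by
                apply mul_le_mul (mul_le_mul_of_nonneg_left hσ2 (abs_nonneg _)) hfb
                  (abs_nonneg _)
                exact mul_nonneg (abs_nonneg _) (by positivity)
            _ ≤ M * |Kd ((F (ψ t) - F x) / h)| := by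
                rw [hMdef]
                nlinarith only [abs_nonneg (Kd ((F (ψ t) - F x) / h)), sq_nonneg Cσ, hCf0]
        have hint : |B x| ≤ (2 * h ^ 2)⁻¹ * (M * Λ.toReal) := by
          rw [hBdef]
          simp only
          rw [abs_mul, abs_of_nonneg (by positivity : (0:ℝ) ≤ (2 * h ^ 2)⁻¹)]
          apply mul_le_mul_of_nonneg_left _ (by positivity)
          have h1 : |∫ t in (0:ℝ)..T, Kd ((F (ψ t) - F x) / h) * σ (ψ t) ^ 2 * f (ψ t)|
              ≤ (∫⁻ t in Set.Ioc (0:ℝ) T, ENNReal.ofReal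
                  |Kd ((F (ψ t) - F x) / h) * σ (ψ t) ^ 2 * f (ψ t)|).toReal := by
            rw [intervalIntegral.integral_of_le hT.le]
            simpa only [Real.norm_eq_abs] using MeasureTheory.norm_integral_le_lintegral_norm
              (μ := volume.restrict (Set.Ioc (0:ℝ) T))
              (fun t => Kd ((F (ψ t) - F x) / h) * σ (ψ t) ^ 2 * f (ψ t))
          have h2 : (∫⁻ t in Set.Ioc (0:ℝ) T, ENNReal.ofReal
              |Kd ((F (ψ t) - F x) / h) * σ (ψ t) ^ 2 * f (ψ t)|)
              ≤ ENNReal.ofReal M * Λ := by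
            rw [hΛdef, ← lintegral_const_mul' _ _ ENNReal.ofReal_ne_top]
            apply lintegral_mono
            intro t
            exact le_trans (ENNReal.ofReal_le_ofReal (hg t))
              (le_of_eq (ENNReal.ofReal_mul hM0.le))
          have h3 : (ENNReal.ofReal M * Λ).toReal = M * Λ.toReal := by
            rw [ENNReal.toReal_mul, ENNReal.toReal_ofReal hM0.le]
          refine le_trans h1 (le_trans (ENNReal.toReal_mono ?_ h2) (le_of_eq h3))
          exact ENNReal.mul_ne_top ENNReal.ofReal_ne_top hΛtop
        have hB2 : B x ^ 2 ≤ (2 * h ^ 2)⁻¹ ^ 2 * M ^ 2 * Λ.toReal ^ 2 := by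
          have h4 := pow_le_pow_left₀ (abs_nonneg (B x)) hint 2
          rw [sq_abs] at h4
          calc B x ^ 2 ≤ ((2 * h ^ 2)⁻¹ * (M * Λ.toReal)) ^ 2 := h4
            _ = (2 * h ^ 2)⁻¹ ^ 2 * M ^ 2 * Λ.toReal ^ 2 := by ring
        calc ENNReal.ofReal (B x ^ 2 * f x)
            ≤ ENNReal.ofReal (((2 * h ^ 2)⁻¹ ^ 2 * M ^ 2 * Λ.toReal ^ 2) * f x) :=
              ENNReal.ofReal_le_ofReal (mul_le_mul_of_nonneg_right hB2 (hf_pos x).le)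
          _ = ENNReal.ofReal ((2 * h ^ 2)⁻¹ ^ 2 * M ^ 2) * ENNReal.ofReal (Λ.toReal ^ 2)
              * ENNReal.ofReal (f x) := by
              rw [ENNReal.ofReal_mul (by positivity), ENNReal.ofReal_mul (by positivity)]
          _ = ENNReal.ofReal ((2 * h ^ 2)⁻¹ ^ 2 * M ^ 2) * Λ ^ 2 * ENNReal.ofReal (f x) := by
              rw [ENNReal.ofReal_pow ENNReal.toReal_nonneg, ENNReal.ofReal_toReal hΛtop]
          _ ≤ ENNReal.ofReal ((2 * h ^ 2)⁻¹ ^ 2 * M ^ 2) * (ENNReal.ofReal T * Q x)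
              * ENNReal.ofReal (f x) :=
              mul_le_mul' (mul_le_mul' le_rfl hCS) le_rfl
    have hswap : (∫⁻ x, Q x * ENNReal.ofReal (f x))
        ≤ ENNReal.ofReal (h * I2) * ENNReal.ofReal T := by
      have hQf : ∀ x, Q x * ENNReal.ofReal (f x)
          = ∫⁻ t in Set.Ioc (0:ℝ) T,
              ENNReal.ofReal (Kd ((F (ψ t) - F x) / h) ^ 2 * f x) := by
        intro x
        rw [hQdef]
        simp only
        rw [← lintegral_mul_const' (ENNReal.ofReal (f x)) _ ENNReal.ofReal_ne_top]
        exact lintegral_congr fun t => by rw [← ENNReal.ofReal_mul (sq_nonneg _)]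
      have htonelli : (∫⁻ x, ∫⁻ t in Set.Ioc (0:ℝ) T,
            ENNReal.ofReal (Kd ((F (ψ t) - F x) / h) ^ 2 * f x))
          = ∫⁻ t in Set.Ioc (0:ℝ) T, ∫⁻ x,
              ENNReal.ofReal (Kd ((F (ψ t) - F x) / h) ^ 2 * f x) := by
        apply lintegral_lintegral_swap
        apply Measurable.aemeasurable
        apply Measurable.ennreal_ofReal
        apply Measurable.mul
        · exact ((hKdmeas.comp
            (((hFcont.comp (hψcont.comp continuous_snd)).sub
              (hFcont.comp continuous_fst)).div_const h).measurable).pow_const 2)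
        · exact (hf_cont.comp continuous_fst).measurable
      have hper : ∀ w : ℝ, (∫⁻ x, ENNReal.ofReal (Kd ((w - F x) / h) ^ 2 * f x))
          ≤ ENNReal.ofReal (h * I2) := by
        intro w
        have hcov := aux_lintegral_image MeasurableSet.univ
          (fun x _ => (hFd x).hasDerivWithinAt) (Function.Injective.injOn hFmono.injective)
          (fun y => ENNReal.ofReal (Kd ((w - y) / h) ^ 2))
        rw [hFimg, Measure.restrict_univ] at hcov
        have e : (∫⁻ x, ENNReal.ofReal (Kd ((w - F x) / h) ^ 2 * f x))
            = ∫⁻ x, ENNReal.ofReal |f x| * ENNReal.ofReal (Kd ((w - F x) / h) ^ 2) := by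
          apply lintegral_congr
          intro x
          rw [← ENNReal.ofReal_mul (abs_nonneg (f x))]
          congr 1
          rw [abs_of_pos (hf_pos x)]
          ring
        rw [e, ← hcov]
        refine le_trans (lintegral_mono' Measure.restrict_le_self le_rfl) ?_
        rw [← ofReal_integral_eq_lintegral_ofReal
          (aux_integrable_sub_left hKd_L2 w hh0.ne')
          (Filter.Eventually.of_forall fun y => sq_nonneg _)]
        apply le_of_eq
        apply congrArg
        rw [aux_int_sub_left (fun u => Kd u ^ 2) w h, abs_of_pos hh0, hI2def]
      calc (∫⁻ x, Q x * ENNReal.ofReal (f x))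
          = ∫⁻ x, ∫⁻ t in Set.Ioc (0:ℝ) T,
              ENNReal.ofReal (Kd ((F (ψ t) - F x) / h) ^ 2 * f x) := lintegral_congr hQf
        _ = ∫⁻ t in Set.Ioc (0:ℝ) T, ∫⁻ x,
              ENNReal.ofReal (Kd ((F (ψ t) - F x) / h) ^ 2 * f x) := htonelli
        _ ≤ ∫⁻ _t in Set.Ioc (0:ℝ) T, ENNReal.ofReal (h * I2) :=
            lintegral_mono fun t => hper (F (ψ t))
        _ = ENNReal.ofReal (h * I2) * ENNReal.ofReal T := by
            rw [setLIntegral_const, Real.volume_Ioc, sub_zero]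
    calc (∫⁻ x, ENNReal.ofReal (B x ^ 2 * f x))
        ≤ ∫⁻ x, ENNReal.ofReal ((2 * h ^ 2)⁻¹ ^ 2 * M ^ 2) * (ENNReal.ofReal T * Q x)
            * ENNReal.ofReal (f x) := lintegral_mono hBpt
      _ = ENNReal.ofReal ((2 * h ^ 2)⁻¹ ^ 2 * M ^ 2) * ENNReal.ofReal T
            * ∫⁻ x, Q x * ENNReal.ofReal (f x) := by
          rw [← lintegral_const_mul' _ _
            (ENNReal.mul_ne_top ENNReal.ofReal_ne_top ENNReal.ofReal_ne_top)]
          exact lintegral_congr fun x => by ring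
      _ ≤ ENNReal.ofReal ((2 * h ^ 2)⁻¹ ^ 2 * M ^ 2) * ENNReal.ofReal T
            * (ENNReal.ofReal (h * I2) * ENNReal.ofReal T) := mul_le_mul' le_rfl hswap
      _ = ENNReal.ofReal (M ^ 2 * T ^ 2 * I2 / 4 * (1 / h ^ 3)) := by
          rw [← ENNReal.ofReal_mul (by positivity), ← ENNReal.ofReal_mul (by positivity),
            ← ENNReal.ofReal_mul (by positivity)]
          congr 1
          field_simp
          ring
  -- ## pointwise decomposition and conclusion
  have hptwise : ∀ x, ENNReal.ofReal (G x) ≤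
      (Set.Icc (-Δ) Δ).indicator (fun _ => ENNReal.ofReal K1) x
        + ENNReal.ofReal K2 * ENNReal.ofReal (B x ^ 2 * f x) := by
    intro x
    by_cases hx : x ∈ Set.Icc (-Δ) Δ
    · have ha2 : A x ^ 2 ≤ CA ^ 2 := by
        rw [← sq_abs (A x)]
        exact pow_le_pow_left₀ (abs_nonneg _) (hA x hx) 2
      have hd0 : 0 ≤ δ x := hδ_nonneg x
      have hd1 : δ x ≤ Cδ := hCδ x
      have hd2 : δ x ≤ Cδ / f₂ * f x := by
        calc δ x ≤ Cδ := hCδ x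
          _ = Cδ / f₂ * f₂ := by field_simp
          _ ≤ Cδ / f₂ * f x :=
            mul_le_mul_of_nonneg_left (hf₂_lb x hx) (by positivity)
      have hreal : G x ≤ K1 + K2 * (B x ^ 2 * f x) := by
        rw [hGdef, hK1def, hK2def]
        simp only
        have s2 : (A x - B x) ^ 2 ≤ 2 * A x ^ 2 + 2 * B x ^ 2 := by
          nlinarith only [sq_nonneg (A x + B x)]
        have s3 : (A x - B x) ^ 2 * δ x ≤ (2 * A x ^ 2 + 2 * B x ^ 2) * δ x :=
          mul_le_mul_of_nonneg_right s2 hd0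
        have s5 : A x ^ 2 * δ x ≤ CA ^ 2 * Cδ :=
          mul_le_mul ha2 hd1 hd0 (sq_nonneg _)
        have s6 : B x ^ 2 * δ x ≤ B x ^ 2 * (Cδ / f₂ * f x) :=
          mul_le_mul_of_nonneg_left hd2 (sq_nonneg _)
        have s7 : (T⁻¹ * (A x - B x)) ^ 2 * δ x = T⁻¹ ^ 2 * ((A x - B x) ^ 2 * δ x) := by
          ring
        rw [s7]
        have s8 : (A x - B x) ^ 2 * δ x
            ≤ 2 * (CA ^ 2 * Cδ) + 2 * (B x ^ 2 * (Cδ / f₂ * f x)) := by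
          nlinarith only [s3, s5, s6, hd0]
        calc T⁻¹ ^ 2 * ((A x - B x) ^ 2 * δ x)
            ≤ T⁻¹ ^ 2 * (2 * (CA ^ 2 * Cδ) + 2 * (B x ^ 2 * (Cδ / f₂ * f x))) :=
              mul_le_mul_of_nonneg_left s8 (sq_nonneg _)
          _ = 2 * T⁻¹ ^ 2 * CA ^ 2 * Cδ + 2 * T⁻¹ ^ 2 * (Cδ / f₂) * (B x ^ 2 * f x) := by
              ring
      calc ENNReal.ofReal (G x) ≤ ENNReal.ofReal (K1 + K2 * (B x ^ 2 * f x)) :=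
            ENNReal.ofReal_le_ofReal hreal
        _ = ENNReal.ofReal K1 + ENNReal.ofReal K2 * ENNReal.ofReal (B x ^ 2 * f x) := by
            rw [ENNReal.ofReal_add hK10
              (mul_nonneg hK20 (mul_nonneg (sq_nonneg _) (hf_pos x).le)),
              ENNReal.ofReal_mul hK20]
        _ = (Set.Icc (-Δ) Δ).indicator (fun _ => ENNReal.ofReal K1) x
              + ENNReal.ofReal K2 * ENNReal.ofReal (B x ^ 2 * f x) := by
            rw [Set.indicator_of_mem hx]
    · have hGx : G x = 0 := by
        rw [hGdef]
        simp [hδ_supp x hx]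
      rw [hGx, ENNReal.ofReal_zero]
      exact zero_le
  calc (∫⁻ x, ENNReal.ofReal (G x))
      ≤ ∫⁻ x, ((Set.Icc (-Δ) Δ).indicator (fun _ => ENNReal.ofReal K1) x
          + ENNReal.ofReal K2 * ENNReal.ofReal (B x ^ 2 * f x)) := lintegral_mono hptwise
    _ = (∫⁻ x, (Set.Icc (-Δ) Δ).indicator (fun _ => ENNReal.ofReal K1) x)
          + ∫⁻ x, ENNReal.ofReal K2 * ENNReal.ofReal (B x ^ 2 * f x) :=
        lintegral_add_left (measurable_const.indicator measurableSet_Icc) _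
    _ = ENNReal.ofReal K1 * ENNReal.ofReal (2 * Δ)
          + ENNReal.ofReal K2 * ∫⁻ x, ENNReal.ofReal (B x ^ 2 * f x) := by
        rw [lintegral_indicator measurableSet_Icc, setLIntegral_const,
          lintegral_const_mul' _ _ ENNReal.ofReal_ne_top, Real.volume_Icc,
          show Δ - -Δ = 2 * Δ by ring]
    _ ≤ ENNReal.ofReal K1 * ENNReal.ofReal (2 * Δ)
          + ENNReal.ofReal K2 * ENNReal.ofReal (M ^ 2 * T ^ 2 * I2 / 4 * (1 / h ^ 3)) :=
        add_le_add le_rfl (mul_le_mul' le_rfl hB)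
    _ = ENNReal.ofReal (K1 * (2 * Δ) + K2 * (M ^ 2 * T ^ 2 * I2 / 4 * (1 / h ^ 3))) := by
        rw [← ENNReal.ofReal_mul hK10, ← ENNReal.ofReal_mul hK20,
          ← ENNReal.ofReal_add (by positivity) (by positivity)]
    _ ≤ ENNReal.ofReal (c / h ^ 3) := by
        apply ENNReal.ofReal_le_ofReal
        have e1 : K2 * (M ^ 2 * T ^ 2 * I2 / 4 * (1 / h ^ 3)) = CB / h ^ 3 := by
          rw [hCBdef]; ring
        rw [e1, hcdef, le_div_iff₀ hh3]
        have e2 : (K1 * (2 * Δ) + CB / h ^ 3) * h ^ 3 = K1 * (2 * Δ) * h ^ 3 + CB := by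
          field_simp
        rw [e2]
        have e3 : K1 * (2 * Δ) * h ^ 3 ≤ K1 * (2 * Δ) :=
          mul_le_of_le_one_right (by positivity) hh3le
        linarith only [e3, hCB0]
end
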